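/- Assume in addition that Ĝ is nonincreasing on [0,∞). Let x ∈ [−1,1], let x₁, …, x_K ∈ [−1,1] be pairwise distinct, and let 0 < t₀ < π/2. Then inf over (λ₁,…,λ_K) ∈ ℝ^K of ∫_ℝ |e^{ixt} − Σ_{k=1}^K λ_k e^{ix_k t}|² Ĝ(t) dt ≥ Ĝ((K+1)t₀/2) · (t₀^{2K+1}/π^{2K}) · ∏_{k=1}^K |x − x_k|². -/

import Mathlib

open MeasureTheory

private lemma abs_exp_I_sub_sq (u v : ℝ) :
    ‖Complex.exp ((u : ℂ) * Complex.I) - Complex.exp ((v : ℂ) * Complex.I)‖ ^ 2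
      = 2 - 2 * Real.cos (u - v) := by
  rw [Complex.sq_norm, Complex.normSq_apply, Complex.sub_re, Complex.sub_im,
    Complex.exp_ofReal_mul_I_re, Complex.exp_ofReal_mul_I_im,
    Complex.exp_ofReal_mul_I_re, Complex.exp_ofReal_mul_I_im, Real.cos_sub]
  have h1 := Real.sin_sq_add_cos_sq u
  have h2 := Real.sin_sq_add_cos_sq v
  nlinarith

private lemma exp_diff_lower (a b t₀ : ℝ) (hab : |a - b| ≤ 2) (ht₀ : 0 < t₀)
    (ht₀' : t₀ < Real.pi / 2) :
    (2 * t₀ / Real.pi) ^ 2 * (a - b) ^ 2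
      ≤ ‖Complex.exp (Complex.I * (a : ℂ) * (t₀ : ℂ))
          - Complex.exp (Complex.I * (b : ℂ) * (t₀ : ℂ))‖ ^ 2 := by
  have hπ : (0 : ℝ) < Real.pi := Real.pi_pos
  have h1 : Complex.I * (a : ℂ) * (t₀ : ℂ) = ((a * t₀ : ℝ) : ℂ) * Complex.I := by
    push_cast; ring
  have h2 : Complex.I * (b : ℂ) * (t₀ : ℂ) = ((b * t₀ : ℝ) : ℂ) * Complex.I := by
    push_cast; ring
  rw [h1, h2, abs_exp_I_sub_sq]
  set θ : ℝ := (a - b) * t₀ / 2 with hθ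
  have hcos : a * t₀ - b * t₀ = 2 * θ := by rw [hθ]; ring
  have hsin : 2 - 2 * Real.cos (a * t₀ - b * t₀) = 4 * Real.sin θ ^ 2 := by
    rw [hcos, Real.cos_two_mul]
    have := Real.sin_sq_add_cos_sq θ
    nlinarith
  rw [hsin]
  have hθle : |θ| ≤ Real.pi / 2 := by
    rw [hθ]
    have : |(a - b) * t₀ / 2| = |a - b| * t₀ / 2 := by
      rw [abs_div, abs_mul, abs_of_pos ht₀]
      norm_num
    rw [this]
    nlinarith [abs_nonneg (a - b)]
  have hJ := Real.mul_abs_le_abs_sin hθle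
  have hJ2 : (2 / Real.pi * |θ|) ^ 2 ≤ Real.sin θ ^ 2 := by
    have h0 : 0 ≤ 2 / Real.pi * |θ| := by positivity
    calc (2 / Real.pi * |θ|) ^ 2 ≤ |Real.sin θ| ^ 2 := by
          exact pow_le_pow_left₀ h0 hJ 2
      _ = Real.sin θ ^ 2 := sq_abs _
  have hexpand : (2 / Real.pi * |θ|) ^ 2 = (2 * t₀ / Real.pi) ^ 2 * (a - b) ^ 2 / 4 := by
    rw [mul_pow, sq_abs, hθ]
    field_simp
    ring
  nlinarith

open Finset in
/-- lower bound on the conditional variance: if `Ĝ` is in addition nonincreasing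
on `[0,∞)`, then for `x, x₁, …, x_K ∈ [-1,1]` (the `x_k` pairwise distinct) and `0 < t₀ < π/2`,
`inf_λ ∫ |e^{ixt} - Σ λ_k e^{ix_k t}|² Ĝ(t) dt ≥ Ĝ((K+1)t₀/2) (t₀^{2K+1}/π^{2K}) ∏|x-x_k|²`. -/
theorem condVar_lower_bound
    (Ghat : ℝ → ℝ) (hcont : Continuous Ghat) (heven : ∀ t, Ghat (-t) = Ghat t)
    (hpos : ∀ t, 0 < Ghat t) (hint : Integrable Ghat)
    (hmono : ∀ s t : ℝ, 0 ≤ s → s ≤ t → Ghat t ≤ Ghat s)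
    (x : ℝ) (hx : x ∈ Set.Icc (-1 : ℝ) 1)
    (K : ℕ) (xs : Fin K → ℝ) (hxs : ∀ k, xs k ∈ Set.Icc (-1 : ℝ) 1)
    (hinj : Function.Injective xs)
    (t₀ : ℝ) (ht₀ : 0 < t₀) (ht₀' : t₀ < Real.pi / 2) :
    Ghat ((K + 1) * t₀ / 2) * (t₀ ^ (2 * K + 1) / Real.pi ^ (2 * K)) * ∏ k, |x - xs k| ^ 2
      ≤ ⨅ lam : Fin K → ℝ, ∫ t : ℝ,
          ‖Complex.exp (Complex.I * (x : ℂ) * (t : ℂ))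
            - ∑ k, (lam k : ℂ) * Complex.exp (Complex.I * (xs k : ℂ) * (t : ℂ))‖ ^ 2
          * Ghat t := by
  classical
  have hπ : (0 : ℝ) < Real.pi := Real.pi_pos
  refine le_ciInf fun lam => ?_
  set F : ℝ → ℂ := fun t => Complex.exp (Complex.I * (x : ℂ) * (t : ℂ))
      - ∑ k, (lam k : ℂ) * Complex.exp (Complex.I * (xs k : ℂ) * (t : ℂ)) with hFdef
  show Ghat ((K + 1) * t₀ / 2) * (t₀ ^ (2 * K + 1) / Real.pi ^ (2 * K)) * ∏ k, |x - xs k| ^ 2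
      ≤ ∫ t : ℝ, ‖F t‖ ^ 2 * Ghat t
  set e : ℝ → ℂ := fun z => Complex.exp (Complex.I * (z : ℂ) * (t₀ : ℂ)) with hedef
  set P : ℂ := ∏ k, (e x - e (xs k)) with hPdef
  have hshift : ∀ (z t : ℝ) (j : ℕ),
      Complex.exp (Complex.I * (z : ℂ) * ((t + j * t₀ : ℝ) : ℂ))
        = Complex.exp (Complex.I * (z : ℂ) * (t : ℂ)) * (e z) ^ j := by
    intro z t j
    rw [hedef, ← Complex.exp_nat_mul, ← Complex.exp_add]
    congr 1
    push_cast
    ring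
  have key : ∀ (z t : ℝ),
      ∑ S ∈ (univ : Finset (Fin K)).powerset,
        (∏ k ∈ univ \ S, (-(e (xs k)))) *
          Complex.exp (Complex.I * (z : ℂ) * ((t + S.card * t₀ : ℝ) : ℂ))
      = (∏ k, (e z - e (xs k))) * Complex.exp (Complex.I * (z : ℂ) * (t : ℂ)) := by
    intro z t
    have hpa := Finset.prod_add (fun _ : Fin K => e z) (fun k => -(e (xs k))) univ
    have : ∏ k, (e z - e (xs k)) = ∏ k, (e z + (-(e (xs k)))) := by
      refine Finset.prod_congr rfl fun k _ => ?_; ring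
    rw [this, hpa, Finset.sum_mul]
    refine Finset.sum_congr rfl fun S _ => ?_
    rw [hshift z t S.card, Finset.prod_const]
    ring
  have keyF : ∀ t : ℝ,
      ∑ S ∈ (univ : Finset (Fin K)).powerset,
        (∏ k ∈ univ \ S, (-(e (xs k)))) * F (t + S.card * t₀)
      = P * Complex.exp (Complex.I * (x : ℂ) * (t : ℂ)) := by
    intro t
    have expand : ∀ S : Finset (Fin K),
        (∏ k ∈ univ \ S, (-(e (xs k)))) * F (t + S.card * t₀)
        = (∏ k ∈ univ \ S, (-(e (xs k)))) *
            Complex.exp (Complex.I * (x : ℂ) * ((t + S.card * t₀ : ℝ) : ℂ))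
          - ∑ k, (lam k : ℂ) * ((∏ k' ∈ univ \ S, (-(e (xs k')))) *
              Complex.exp (Complex.I * (xs k : ℂ) * ((t + S.card * t₀ : ℝ) : ℂ))) := by
      intro S
      simp only [hFdef]
      rw [mul_sub, Finset.mul_sum]
      congr 1
      refine Finset.sum_congr rfl fun k _ => ?_
      ring
    rw [Finset.sum_congr rfl fun S _ => expand S, Finset.sum_sub_distrib, key x t,
      Finset.sum_comm]
    have hzero : ∀ k : Fin K,
        ∑ S ∈ (univ : Finset (Fin K)).powerset,
          (lam k : ℂ) * ((∏ k' ∈ univ \ S, (-(e (xs k')))) *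
            Complex.exp (Complex.I * (xs k : ℂ) * ((t + S.card * t₀ : ℝ) : ℂ))) = 0 := by
      intro k
      rw [← Finset.mul_sum, key (xs k) t]
      have h0 : (∏ k' : Fin K, (e (xs k) - e (xs k'))) = 0 :=
        Finset.prod_eq_zero (Finset.mem_univ k) (sub_self (e (xs k)))
      rw [h0]
      simp
    rw [Finset.sum_congr rfl fun k _ => hzero k]
    simp [hPdef]
  -- pointwise bound
  have habsexp : ∀ (z t : ℝ), ‖Complex.exp (Complex.I * (z : ℂ) * (t : ℂ))‖ = 1 := by
    intro z t
    have h : Complex.I * (z : ℂ) * (t : ℂ) = ((z * t : ℝ) : ℂ) * Complex.I := by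
      push_cast; ring
    rw [h, Complex.norm_exp_ofReal_mul_I]
  have habsc : ∀ S : Finset (Fin K), ‖∏ k ∈ univ \ S, (-(e (xs k)))‖ = 1 := by
    intro S
    rw [norm_prod]
    refine Finset.prod_eq_one fun k _ => ?_
    rw [norm_neg]
    exact habsexp (xs k) t₀
  have hpt : ∀ t : ℝ, ‖P‖ ^ 2
      ≤ 4 ^ K * ∑ j ∈ Finset.range (K + 1), ‖F (t + j * t₀)‖ ^ 2 := by
    intro t
    have h1 : ‖P‖ ≤ ∑ S ∈ (univ : Finset (Fin K)).powerset,
        ‖F (t + S.card * t₀)‖ := by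
      calc ‖P‖
          = ‖P * Complex.exp (Complex.I * (x : ℂ) * (t : ℂ))‖ := by
            rw [norm_mul, habsexp, mul_one]
        _ = ‖∑ S ∈ (univ : Finset (Fin K)).powerset,
              (∏ k ∈ univ \ S, (-(e (xs k)))) * F (t + S.card * t₀)‖ := by rw [keyF t]
        _ ≤ ∑ S ∈ (univ : Finset (Fin K)).powerset,
              ‖(∏ k ∈ univ \ S, (-(e (xs k)))) * F (t + S.card * t₀)‖ :=
            norm_sum_le _ _
        _ = ∑ S ∈ (univ : Finset (Fin K)).powerset, ‖F (t + S.card * t₀)‖ := by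
            refine Finset.sum_congr rfl fun S _ => ?_
            rw [norm_mul, habsc S, one_mul]
    have h2 : ∑ S ∈ (univ : Finset (Fin K)).powerset, ‖F (t + S.card * t₀)‖
        = ∑ j ∈ Finset.range (K + 1), (K.choose j : ℝ) * ‖F (t + j * t₀)‖ := by
      rw [Finset.sum_powerset]
      rw [show (univ : Finset (Fin K)).card = K by simp]
      refine Finset.sum_congr rfl fun j hj => ?_
      have : ∀ S ∈ Finset.powersetCard j (univ : Finset (Fin K)),
          ‖F (t + S.card * t₀)‖ = ‖F (t + j * t₀)‖ := by
        intro S hS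
        rw [(Finset.mem_powersetCard.1 hS).2]
      rw [Finset.sum_congr rfl this, Finset.sum_const, Finset.card_powersetCard]
      simp [nsmul_eq_mul]
    have h3 := Finset.sum_mul_sq_le_sq_mul_sq (Finset.range (K + 1))
        (fun j => (K.choose j : ℝ)) (fun j => ‖F (t + j * t₀)‖)
    have h4 : ∑ j ∈ Finset.range (K + 1), ((K.choose j : ℝ)) ^ 2 ≤ 4 ^ K := by
      have hs := Finset.sum_sq_le_sq_sum_of_nonneg
        (s := Finset.range (K + 1)) (f := fun j => (K.choose j : ℝ))
        (fun i _ => by positivity)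
      have hsum : ∑ j ∈ Finset.range (K + 1), (K.choose j : ℝ) = 2 ^ K := by
        rw [← Nat.cast_sum]
        norm_cast
        exact Nat.sum_range_choose K
      rw [hsum] at hs
      calc ∑ j ∈ Finset.range (K + 1), ((K.choose j : ℝ)) ^ 2 ≤ ((2 : ℝ) ^ K) ^ 2 := hs
        _ = 4 ^ K := by rw [← pow_mul, mul_comm, pow_mul]; norm_num
    have h5 : ‖P‖ ^ 2
        ≤ (∑ j ∈ Finset.range (K + 1), (K.choose j : ℝ) * ‖F (t + j * t₀)‖) ^ 2 := by
      apply pow_le_pow_left₀ (norm_nonneg P)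
      rw [← h2]; exact h1
    have h6 : (0 : ℝ) ≤ ∑ j ∈ Finset.range (K + 1), ‖F (t + j * t₀)‖ ^ 2 :=
      Finset.sum_nonneg fun j _ => by positivity
    calc ‖P‖ ^ 2
        ≤ (∑ j ∈ Finset.range (K + 1), (K.choose j : ℝ) * ‖F (t + j * t₀)‖) ^ 2 := h5
      _ ≤ (∑ j ∈ Finset.range (K + 1), ((K.choose j : ℝ)) ^ 2) *
            ∑ j ∈ Finset.range (K + 1), ‖F (t + j * t₀)‖ ^ 2 := h3
      _ ≤ 4 ^ K * ∑ j ∈ Finset.range (K + 1), ‖F (t + j * t₀)‖ ^ 2 :=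
          mul_le_mul_of_nonneg_right h4 h6

  have hexpc : ∀ z : ℝ, Continuous fun t : ℝ => Complex.exp (Complex.I * (z : ℂ) * (t : ℂ)) :=
    fun z => Complex.continuous_exp.comp (continuous_const.mul Complex.continuous_ofReal)
  have hFcont : Continuous F := by
    rw [hFdef]
    exact (hexpc x).sub (continuous_finset_sum _ fun k _ => continuous_const.mul (hexpc (xs k)))
  have habsFcont : Continuous fun t => ‖F t‖ ^ 2 :=
    (continuous_norm.comp hFcont).pow 2
  set b : ℝ := (K + 1) * t₀ / 2 with hbdef
  set p : ℕ → ℝ := fun j => -b + j * t₀ with hpdef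
  have hp0 : p 0 = -b := by simp [hpdef]
  have hpK : p (K + 1) = b := by rw [hpdef]; push_cast; rw [hbdef]; ring
  have hbpos : 0 < b := by rw [hbdef]; positivity
  have hshiftcont : ∀ j : ℕ, Continuous fun t : ℝ => ‖F (t + j * t₀)‖ ^ 2 :=
    fun j => ((continuous_norm.comp (hFcont.comp (continuous_id.add continuous_const))).pow 2)
  have hstep : ∫ t in (-b)..(-b + t₀), (‖P‖ ^ 2 : ℝ)
      ≤ ∫ t in (-b)..(-b + t₀),
          4 ^ K * ∑ j ∈ Finset.range (K + 1), ‖F (t + j * t₀)‖ ^ 2 := by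
    apply intervalIntegral.integral_mono_on (by linarith)
    · exact intervalIntegrable_const
    · exact Continuous.intervalIntegrable
        (continuous_const.mul (continuous_finset_sum _ fun j _ => hshiftcont j)) _ _
    · intro t _; exact hpt t
  have hconst : ∫ t in (-b)..(-b + t₀), (‖P‖ ^ 2 : ℝ) = ‖P‖ ^ 2 * t₀ := by
    rw [intervalIntegral.integral_const, smul_eq_mul]; ring
  have hsumint : ∫ t in (-b)..(-b + t₀),
        4 ^ K * ∑ j ∈ Finset.range (K + 1), ‖F (t + j * t₀)‖ ^ 2
      = 4 ^ K * ∫ t in (-b)..b, ‖F t‖ ^ 2 := by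
    rw [intervalIntegral.integral_const_mul]
    congr 1
    rw [intervalIntegral.integral_finset_sum
      (fun j _ => (hshiftcont j).intervalIntegrable _ _)]
    have hterm : ∀ j ∈ Finset.range (K + 1),
        (∫ t in (-b)..(-b + t₀), ‖F (t + j * t₀)‖ ^ 2)
          = ∫ t in p j..p (j + 1), ‖F t‖ ^ 2 := by
      intro j _
      rw [intervalIntegral.integral_comp_add_right (fun t => ‖F t‖ ^ 2)]
      congr 1 <;> (rw [hpdef]; push_cast; ring)
    rw [Finset.sum_congr rfl hterm,
      intervalIntegral.sum_integral_adjacent_intervals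
        (fun j _ => habsFcont.intervalIntegrable _ _),
      hp0, hpK]
  have hmain1 : ‖P‖ ^ 2 * t₀ ≤ 4 ^ K * ∫ t in (-b)..b, ‖F t‖ ^ 2 := by
    rw [← hconst, ← hsumint]; exact hstep
  have hGpos : ∀ t, 0 ≤ Ghat t := fun t => (hpos t).le
  have hGlb : ∀ t ∈ Set.Icc (-b) b, Ghat b ≤ Ghat t := by
    intro t ht
    rcases le_total 0 t with h | h
    · exact hmono t b h ht.2
    · rw [← heven t]
      exact hmono (-t) b (neg_nonneg.2 h) (by linarith [ht.1])
  have hw : ∫ t in (-b)..b, ‖F t‖ ^ 2 * Ghat b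
      ≤ ∫ t in (-b)..b, ‖F t‖ ^ 2 * Ghat t := by
    apply intervalIntegral.integral_mono_on (by linarith)
    · exact (habsFcont.mul continuous_const).intervalIntegrable _ _
    · exact (habsFcont.mul hcont).intervalIntegrable _ _
    · intro t ht; exact mul_le_mul_of_nonneg_left (hGlb t ht) (by positivity)
  set M : ℝ := (1 + ∑ k, |lam k|) ^ 2 with hMdef
  have hFb : ∀ t : ℝ, ‖F t‖ ≤ 1 + ∑ k, |lam k| := by
    intro t
    simp only [hFdef]
    refine (norm_sub_le _ _).trans ?_
    have h1 : ‖Complex.exp (Complex.I * (x : ℂ) * (t : ℂ))‖ = 1 := by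
      exact habsexp x t
    have h2 : ‖∑ k, (lam k : ℂ) * Complex.exp (Complex.I * (xs k : ℂ) * (t : ℂ))‖
        ≤ ∑ k, |lam k| := by
      refine (norm_sum_le _ _).trans ?_
      refine Finset.sum_le_sum fun k _ => ?_
      rw [norm_mul, Complex.norm_real, Real.norm_eq_abs, habsexp, mul_one]
    rw [h1]; linarith
  have hgint : Integrable (fun t => ‖F t‖ ^ 2 * Ghat t) := by
    refine Integrable.mono' (hint.const_mul M) ((habsFcont.mul hcont).aestronglyMeasurable) ?_
    filter_upwards with t
    rw [Real.norm_eq_abs, abs_of_nonneg (mul_nonneg (by positivity) (hGpos t))]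
    have hM : ‖F t‖ ^ 2 ≤ M := by
      rw [hMdef]
      exact pow_le_pow_left₀ (norm_nonneg _) (hFb t) 2
    exact mul_le_mul_of_nonneg_right hM (hGpos t)
  have htail : ∫ t in (-b)..b, ‖F t‖ ^ 2 * Ghat t
      ≤ ∫ t, ‖F t‖ ^ 2 * Ghat t := by
    rw [intervalIntegral.integral_of_le (by linarith : -b ≤ b)]
    apply setIntegral_le_integral hgint
    filter_upwards with t
    exact mul_nonneg (by positivity) (hGpos t)
  have hPlow : 4 ^ K * (t₀ ^ (2 * K) / Real.pi ^ (2 * K) * ∏ k, |x - xs k| ^ 2)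
      ≤ ‖P‖ ^ 2 := by
    have habs2 : ‖P‖ ^ 2 = ∏ k, ‖e x - e (xs k)‖ ^ 2 := by
      rw [hPdef, norm_prod, ← Finset.prod_pow]
    rw [habs2]
    have hfac : ∀ k : Fin K, (2 * t₀ / Real.pi) ^ 2 * (x - xs k) ^ 2
        ≤ ‖e x - e (xs k)‖ ^ 2 := by
      intro k
      apply exp_diff_lower _ _ _ _ ht₀ ht₀'
      have h1 : |x| ≤ 1 := abs_le.2 ⟨hx.1, hx.2⟩
      have h2 : |xs k| ≤ 1 := abs_le.2 ⟨(hxs k).1, (hxs k).2⟩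
      calc |x - xs k| ≤ |x| + |xs k| := by
            simpa [sub_eq_add_neg, abs_neg] using abs_add_le x (-(xs k))
        _ ≤ 2 := by linarith
    have e1 : ∏ k : Fin K, ((x - xs k) ^ 2) = ∏ k, |x - xs k| ^ 2 :=
      Finset.prod_congr rfl fun k _ => (sq_abs _).symm
    have e2 : ((2 * t₀ / Real.pi) ^ 2) ^ K = 4 ^ K * (t₀ ^ (2 * K) / Real.pi ^ (2 * K)) := by
      have h2 : (2 * t₀ / Real.pi) ^ 2 = 4 * (t₀ ^ 2 / Real.pi ^ 2) := by
        field_simp; ring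
      rw [h2, mul_pow, div_pow, ← pow_mul, ← pow_mul]
    calc 4 ^ K * (t₀ ^ (2 * K) / Real.pi ^ (2 * K) * ∏ k, |x - xs k| ^ 2)
        = ∏ k : Fin K, ((2 * t₀ / Real.pi) ^ 2 * (x - xs k) ^ 2) := by
          rw [Finset.prod_mul_distrib, Finset.prod_const, Finset.card_univ, Fintype.card_fin,
            e1, e2]
          ring
      _ ≤ ∏ k, ‖e x - e (xs k)‖ ^ 2 :=
          Finset.prod_le_prod (fun k _ => by positivity) (fun k _ => hfac k)
  have h4pos : (0 : ℝ) < 4 ^ K := by positivity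
  have hI1 : t₀ ^ (2 * K) / Real.pi ^ (2 * K) * (∏ k, |x - xs k| ^ 2) * t₀
      ≤ ∫ t in (-b)..b, ‖F t‖ ^ 2 := by
    have step : 4 ^ K * (t₀ ^ (2 * K) / Real.pi ^ (2 * K) * (∏ k, |x - xs k| ^ 2) * t₀)
        ≤ 4 ^ K * ∫ t in (-b)..b, ‖F t‖ ^ 2 := by
      calc 4 ^ K * (t₀ ^ (2 * K) / Real.pi ^ (2 * K) * (∏ k, |x - xs k| ^ 2) * t₀)
          = 4 ^ K * (t₀ ^ (2 * K) / Real.pi ^ (2 * K) * ∏ k, |x - xs k| ^ 2) * t₀ := by ring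
        _ ≤ ‖P‖ ^ 2 * t₀ := mul_le_mul_of_nonneg_right hPlow ht₀.le
        _ ≤ 4 ^ K * ∫ t in (-b)..b, ‖F t‖ ^ 2 := hmain1
    exact le_of_mul_le_mul_left step h4pos
  calc Ghat b * (t₀ ^ (2 * K + 1) / Real.pi ^ (2 * K)) * ∏ k, |x - xs k| ^ 2
      = (t₀ ^ (2 * K) / Real.pi ^ (2 * K) * (∏ k, |x - xs k| ^ 2) * t₀) * Ghat b := by ring
    _ ≤ (∫ t in (-b)..b, ‖F t‖ ^ 2) * Ghat b :=
        mul_le_mul_of_nonneg_right hI1 (hGpos b)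
    _ = ∫ t in (-b)..b, ‖F t‖ ^ 2 * Ghat b :=
        (intervalIntegral.integral_mul_const _ _).symm
    _ ≤ ∫ t in (-b)..b, ‖F t‖ ^ 2 * Ghat t := hw
    _ ≤ ∫ t, ‖F t‖ ^ 2 * Ghat t := htail
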